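/- Let Ω be a nonempty finite set, P and Q probability distributions on Ω with the same support, A ⊆ Ω an event, and λ > 0 a real number. Writing Pr_P[A] = ∑_{ω ∈ A} P ω and Pr_Q[A] = ∑_{ω ∈ A} Q ω, it holds that Pr_Q[A] ≥ (exp(λ · Pr_P[A] − KL(P‖Q)) − 1)/(exp(λ) − 1). -/

import Mathlib

open Finset

open scoped Classical

/-- lower bound on the probability of an event under `Q` in terms of
its probability under `P` and the KL divergence `KL(P‖Q)`. -/
theorem stmt_4 (Ω : Type*) [Fintype Ω] [Nonempty Ω]
    (P Q : Ω → ℝ)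
    (hP0 : ∀ ω, 0 ≤ P ω) (hP1 : ∑ ω, P ω = 1)
    (hQ0 : ∀ ω, 0 ≤ Q ω) (hQ1 : ∑ ω, Q ω = 1)
    (hsupp : ∀ ω, 0 < P ω ↔ 0 < Q ω)
    (A : Finset Ω) (lam : ℝ) (hlam : 0 < lam) :
    ∑ ω ∈ A, Q ω ≥
      (Real.exp (lam * ∑ ω ∈ A, P ω -
          ∑ ω ∈ Finset.univ.filter (fun ω => 0 < P ω), P ω * Real.log (P ω / Q ω)) - 1)
        / (Real.exp lam - 1) := by
  classical
  set s : Finset Ω := Finset.univ.filter (fun ω => 0 < P ω) with hs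
  set p : ℝ := ∑ ω ∈ A, P ω with hp
  set q : ℝ := ∑ ω ∈ A, Q ω with hq
  set KL : ℝ := ∑ ω ∈ s, P ω * Real.log (P ω / Q ω) with hKL
  set g : Ω → ℝ := fun ω => Q ω * Real.exp (lam * (if ω ∈ A then (1:ℝ) else 0)) with hg
  set S : ℝ := ∑ ω ∈ s, g ω with hS
  have hmem : ∀ ω ∈ s, 0 < P ω := by
    intro ω hω; simpa [hs] using hω
  have hQpos : ∀ ω ∈ s, 0 < Q ω := fun ω hω => (hsupp ω).1 (hmem ω hω)
  have hgpos : ∀ ω ∈ s, 0 < g ω := fun ω hω =>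
    mul_pos (hQpos ω hω) (Real.exp_pos _)
  have hPzero : ∀ ω, ω ∉ s → P ω = 0 := by
    intro ω hω
    by_contra h
    exact hω (by simp [hs, lt_of_le_of_ne (hP0 ω) (Ne.symm h)])
  have hPs : ∑ ω ∈ s, P ω = 1 := by
    rw [← hP1]
    exact Finset.sum_subset (Finset.subset_univ s)
      (fun ω _ hω => hPzero ω hω)
  have hSpos : 0 < S := by
    have hne : s.Nonempty := by
      by_contra h
      rw [Finset.not_nonempty_iff_eq_empty] at h
      rw [h] at hPs; simp at hPs
    exact Finset.sum_pos hgpos hne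
  -- p as a sum over s
  have hpA : lam * p = ∑ ω ∈ s, P ω * (lam * (if ω ∈ A then (1:ℝ) else 0)) := by
    have : ∑ ω ∈ s, P ω * (lam * (if ω ∈ A then (1:ℝ) else 0))
        = ∑ ω ∈ s.filter (fun ω => ω ∈ A), P ω * lam := by
      rw [eq_comm, Finset.sum_filter]
      apply Finset.sum_congr rfl
      intro ω _
      by_cases h : ω ∈ A <;> simp [h] <;> ring
    rw [this]
    have h2 : ∑ ω ∈ s.filter (fun ω => ω ∈ A), P ω * lam
        = ∑ ω ∈ A, P ω * lam := by
      apply Finset.sum_subset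
      · intro ω hω; exact (Finset.mem_filter.mp hω).2
      · intro ω hωA hω
        have : P ω = 0 := by
          by_contra h
          have hPω : 0 < P ω := lt_of_le_of_ne (hP0 ω) (Ne.symm h)
          exact hω (Finset.mem_filter.mpr ⟨by simp [hs, hPω], hωA⟩)
        simp [this]
    rw [h2, ← Finset.sum_mul, hp, mul_comm]
  -- Step 1: lam * p - KL ≤ log S
  have step1 : lam * p - KL ≤ Real.log S := by
    have key : lam * p - KL = ∑ ω ∈ s, P ω * Real.log (g ω / P ω) := by
      rw [hpA, hKL, ← Finset.sum_sub_distrib]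
      apply Finset.sum_congr rfl
      intro ω hω
      have hP' := hmem ω hω
      have hQ' := hQpos ω hω
      rw [← mul_sub]
      congr 1
      rw [hg]
      rw [Real.log_div (by positivity) (ne_of_gt hP'),
        Real.log_mul (ne_of_gt hQ') (by positivity),
        Real.log_exp, Real.log_div (ne_of_gt hP') (ne_of_gt hQ')]
      ring
    rw [key]
    have hterm : ∀ ω ∈ s, P ω * Real.log (g ω / P ω)
        ≤ g ω / S - P ω + P ω * Real.log S := by
      intro ω hω
      have hP' := hmem ω hω
      have hg' := hgpos ω hω
      have h1 : Real.log (g ω / P ω) = Real.log (g ω / (P ω * S)) + Real.log S := by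
        rw [← Real.log_mul (by positivity) (ne_of_gt hSpos)]
        congr 1
        field_simp
      have h2 : Real.log (g ω / (P ω * S)) ≤ g ω / (P ω * S) - 1 :=
        Real.log_le_sub_one_of_pos (by positivity)
      have h3 : P ω * Real.log (g ω / (P ω * S)) ≤ g ω / S - P ω := by
        have := mul_le_mul_of_nonneg_left h2 (le_of_lt hP')
        calc P ω * Real.log (g ω / (P ω * S)) ≤ P ω * (g ω / (P ω * S) - 1) := this
          _ = g ω / S - P ω := by field_simp
      calc P ω * Real.log (g ω / P ω)
          = P ω * Real.log (g ω / (P ω * S)) + P ω * Real.log S := by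
            rw [h1]; ring
        _ ≤ g ω / S - P ω + P ω * Real.log S := by linarith
    calc ∑ ω ∈ s, P ω * Real.log (g ω / P ω)
        ≤ ∑ ω ∈ s, (g ω / S - P ω + P ω * Real.log S) :=
          Finset.sum_le_sum hterm
      _ = (∑ ω ∈ s, g ω) / S - (∑ ω ∈ s, P ω)
            + (∑ ω ∈ s, P ω) * Real.log S := by
          rw [Finset.sum_add_distrib, Finset.sum_sub_distrib, Finset.sum_div,
            ← Finset.sum_mul]
      _ = Real.log S := by rw [hPs, ← hS, div_self (ne_of_gt hSpos)]; ring
  -- Step 2: S ≤ 1 + (exp lam - 1) * q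
  have step2 : S ≤ 1 + (Real.exp lam - 1) * q := by
    have hsub : S ≤ ∑ ω, g ω := by
      apply Finset.sum_le_sum_of_subset_of_nonneg (Finset.subset_univ s)
      intro ω _ _
      exact mul_nonneg (hQ0 ω) (le_of_lt (Real.exp_pos _))
    have hsplit : ∑ ω, g ω = Real.exp lam * q + (1 - q) := by
      rw [← Finset.sum_filter_add_sum_filter_not Finset.univ (fun ω => ω ∈ A) g]
      have h1 : ∑ ω ∈ Finset.univ.filter (fun ω => ω ∈ A), g ω
          = Real.exp lam * q := by
        rw [Finset.filter_mem_eq_inter, Finset.univ_inter, hq, Finset.mul_sum]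
        apply Finset.sum_congr rfl
        intro ω hω
        simp [hg, hω, mul_comm]
      have h2 : ∑ ω ∈ Finset.univ.filter (fun ω => ω ∉ A), g ω = 1 - q := by
        have : ∑ ω ∈ Finset.univ.filter (fun ω => ω ∉ A), g ω
            = ∑ ω ∈ Finset.univ.filter (fun ω => ω ∉ A), Q ω := by
          apply Finset.sum_congr rfl
          intro ω hω
          have : ω ∉ A := (Finset.mem_filter.mp hω).2
          simp [hg, this]
        rw [this]
        have := Finset.sum_filter_add_sum_filter_not Finset.univ
          (fun ω => ω ∈ A) Q
        rw [Finset.filter_mem_eq_inter, Finset.univ_inter, hQ1] at this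
        rw [hq]; linarith
      rw [h1, h2]
    calc S ≤ ∑ ω, g ω := hsub
      _ = Real.exp lam * q + (1 - q) := hsplit
      _ = 1 + (Real.exp lam - 1) * q := by ring
  -- conclude
  have hexp : Real.exp (lam * p - KL) ≤ 1 + (Real.exp lam - 1) * q := by
    calc Real.exp (lam * p - KL) ≤ Real.exp (Real.log S) :=
        Real.exp_le_exp.mpr step1
      _ = S := Real.exp_log hSpos
      _ ≤ 1 + (Real.exp lam - 1) * q := step2
  have hD : 0 < Real.exp lam - 1 := by
    nlinarith [Real.add_one_le_exp lam]
  rw [ge_iff_le, div_le_iff₀ hD]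
  nlinarith
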